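/- Let (J,γ) be a metrised real Jordan algebra of finite dimension n such that the multiplication operator L_x is nilpotent for every x ∈ J. Define F : J → ℝ by F(x) = Σ_{k=2}^{n+1} ((-1)^k / k) γ(x, x^{k-1}) (a polynomial function). Then for every x ∈ J the Hessian D²F(x) is a nondegenerate symmetric bilinear form whose matrix with respect to any fixed basis of J has the same determinant as the matrix of γ with respect to that basis; in particular det D²F(x) is constant in x. -/

import Mathlib

open scoped BigOperators

/-- Powers in a (Jordan) algebra: `x¹ = x`, `x^{k+1} = x ∙ x^k`, i.e. `x^k = L_x^{k-1} x`.
(The value at `k = 0` is junk.) -/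
noncomputable def jpow {J : Type*} [AddCommGroup J] [Module ℝ J]
    (mul : J →ₗ[ℝ] J →ₗ[ℝ] J) (x : J) (k : ℕ) : J :=
  ((mul x) ^ (k - 1)) x

namespace Stmt5

abbrev EE (n : ℕ) := EuclideanSpace ℝ (Fin n)

variable {n : ℕ}

section Defs

variable (mul : EE n →ₗ[ℝ] EE n →ₗ[ℝ] EE n) (γ : EE n →ₗ[ℝ] EE n →ₗ[ℝ] ℝ)

/-- `pwf m x = x^{m+1}`. -/
noncomputable def pwf (m : ℕ) (x : EE n) : EE n := ((mul x) ^ m) x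

/-- `mul x` as an endomorphism (for ring structure). -/
noncomputable def Lop (a : EE n) : Module.End ℝ (EE n) := mul a

/-- `mul` as a continuous bilinear map. -/
noncomputable def Lcm : EE n →L[ℝ] EE n →L[ℝ] EE n :=
  LinearMap.toContinuousLinearMap
    ((LinearMap.toContinuousLinearMap :
        (EE n →ₗ[ℝ] EE n) ≃ₗ[ℝ] (EE n →L[ℝ] EE n)).toLinearMap ∘ₗ mul)

/-- `γ` as a continuous bilinear map. -/
noncomputable def Gc : EE n →L[ℝ] EE n →L[ℝ] ℝ :=
  LinearMap.toContinuousLinearMap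
    ((LinearMap.toContinuousLinearMap :
        (EE n →ₗ[ℝ] ℝ) ≃ₗ[ℝ] (EE n →L[ℝ] ℝ)).toLinearMap ∘ₗ γ)

/-- Derivative of `x ↦ pwf m x`. -/
noncomputable def Dm : ℕ → EE n → (EE n →L[ℝ] EE n)
  | 0, _ => 1
  | m + 1, x => (Lcm mul x).comp (Dm m x) + (Lcm mul).flip (pwf mul m x)

@[simp] lemma Lcm_apply (x v : EE n) : Lcm mul x v = mul x v := by
  simp [Lcm, LinearMap.coe_toContinuousLinearMap']

@[simp] lemma Gc_apply (x v : EE n) : Gc γ x v = γ x v := by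
  simp [Gc, LinearMap.coe_toContinuousLinearMap']

@[simp] lemma Lop_apply (a v : EE n) : Lop mul a v = mul a v := rfl

@[simp] lemma pwf_zero (x : EE n) : pwf mul 0 x = x := by simp [pwf]

lemma pwf_succ (m : ℕ) (x : EE n) : pwf mul (m + 1) x = mul x (pwf mul m x) := by
  simp [pwf, pow_succ', Module.End.mul_apply]

end Defs

section Algebra

variable {mul : EE n →ₗ[ℝ] EE n →ₗ[ℝ] EE n} {γ : EE n →ₗ[ℝ] EE n →ₗ[ℝ] ℝ}

lemma two_torsion_free {M : Type*} [AddCommGroup M] [Module ℝ M]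
    (S : M) (h : S + S = 0) : S = 0 := by
  have h2 : (2 : ℝ) • S = 0 := by rw [two_smul]; exact h
  simpa using (smul_eq_zero.mp h2).resolve_left (by norm_num)

lemma nat_torsion_free {M : Type*} [AddCommGroup M] [Module ℝ M]
    (k : ℕ) (S : M) (h : (k + 1) • S = 0) : S = 0 := by
  have h2 : ((k + 1 : ℕ) : ℝ) • S = 0 := by
    rw [Nat.cast_smul_eq_nsmul]; exact h
  simpa using (smul_eq_zero.mp h2).resolve_left (by positivity)

set_option maxHeartbeats 1000000 in
/-- Linearized Jordan identity. -/
lemma star (hcomm : ∀ u v : EE n, mul u v = mul v u)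
    (hjordan : ∀ u v : EE n, mul u (mul (mul u u) v) = mul (mul u u) (mul u v))
    (u v w : EE n) :
    (Lop mul u * Lop mul (mul v w) - Lop mul (mul v w) * Lop mul u)
      + (Lop mul v * Lop mul (mul w u) - Lop mul (mul w u) * Lop mul v)
      + (Lop mul w * Lop mul (mul u v) - Lop mul (mul u v) * Lop mul w) = 0 := by
  have h : ∀ a : EE n, Lop mul a * Lop mul (mul a a) - Lop mul (mul a a) * Lop mul a = 0 := by
    intro a
    rw [sub_eq_zero]
    exact LinearMap.ext fun z => hjordan a z
  apply two_torsion_free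
  have expand :
      ((Lop mul u * Lop mul (mul v w) - Lop mul (mul v w) * Lop mul u)
        + (Lop mul v * Lop mul (mul w u) - Lop mul (mul w u) * Lop mul v)
        + (Lop mul w * Lop mul (mul u v) - Lop mul (mul u v) * Lop mul w))
      + ((Lop mul u * Lop mul (mul v w) - Lop mul (mul v w) * Lop mul u)
        + (Lop mul v * Lop mul (mul w u) - Lop mul (mul w u) * Lop mul v)
        + (Lop mul w * Lop mul (mul u v) - Lop mul (mul u v) * Lop mul w))
      = (Lop mul (u+v+w) * Lop mul (mul (u+v+w) (u+v+w))
          - Lop mul (mul (u+v+w) (u+v+w)) * Lop mul (u+v+w))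
        - (Lop mul (u+v) * Lop mul (mul (u+v) (u+v))
          - Lop mul (mul (u+v) (u+v)) * Lop mul (u+v))
        - (Lop mul (u+w) * Lop mul (mul (u+w) (u+w))
          - Lop mul (mul (u+w) (u+w)) * Lop mul (u+w))
        - (Lop mul (v+w) * Lop mul (mul (v+w) (v+w))
          - Lop mul (mul (v+w) (v+w)) * Lop mul (v+w))
        + (Lop mul u * Lop mul (mul u u) - Lop mul (mul u u) * Lop mul u)
        + (Lop mul v * Lop mul (mul v v) - Lop mul (mul v v) * Lop mul v)
        + (Lop mul w * Lop mul (mul w w) - Lop mul (mul w w) * Lop mul w) := by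
    simp only [map_add, LinearMap.add_apply, hcomm v u, hcomm w u, hcomm w v]
    simp only [Lop, map_add]
    noncomm_ring
  rw [expand, h, h, h, h, h, h, h]
  simp

/-- Simultaneous strong induction: commuting multiplication operators of powers,
and power associativity.  Here `pwf a x = x^{a+1}`. -/
lemma pcomm_pmul (hcomm : ∀ u v : EE n, mul u v = mul v u)
    (hjordan : ∀ u v : EE n, mul u (mul (mul u u) v) = mul (mul u u) (mul u v))
    (x : EE n) : ∀ s : ℕ,
    (∀ a b, a + b = s →
      Lop mul (pwf mul a x) * Lop mul (pwf mul b x)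
        = Lop mul (pwf mul b x) * Lop mul (pwf mul a x)) ∧
    (∀ a b, a + b = s → mul (pwf mul a x) (pwf mul b x) = pwf mul (s + 1) x) := by
  intro s
  induction s using Nat.strong_induction_on with
  | _ s IH =>
    have hprod : ∀ a b, a + b = s →
        mul (pwf mul a x) (pwf mul b x) = pwf mul (s + 1) x := by
      intro a b hab
      cases b with
      | zero =>
        have ha : a = s := by omega
        subst ha
        rw [pwf_zero, hcomm, ← pwf_succ]
      | succ c =>
        have hc : a + c < s := by omega
        have hcomm_a := (IH a (by omega)).1 a 0 (by omega)
        rw [pwf_succ]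
        have happ := LinearMap.congr_fun hcomm_a (pwf mul c x)
        simp only [Module.End.mul_apply, Lop_apply, pwf_zero] at happ
        rw [happ]
        have hmulac := (IH (a + c) hc).2 a c rfl
        rw [hmulac, show a + c + 1 = s by omega, ← pwf_succ]
    refine ⟨?_, hprod⟩
    set q : ℕ → EE n := fun i => pwf mul i x with hq
    set KK : ℕ → ℕ → Module.End ℝ (EE n) := fun i j =>
      Lop mul (q i) * Lop mul (q j) - Lop mul (q j) * Lop mul (q i) with hKK
    have hanti : ∀ i j, KK i j = -(KK j i) := by
      intro i j; simp only [hKK]; abel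
    have hrel : ∀ a c, a + (c + 1) = s → KK a (c + 1) + KK c (a + 1) + KK 0 s = 0 := by
      intro a c hac
      have hstar := star hcomm hjordan (q a) (q c) x
      have h1 : mul (q c) x = q (c + 1) := by
        rw [hcomm, hq]; exact (pwf_succ mul c x).symm
      have h2 : mul x (q a) = q (a + 1) := by
        rw [hq]; exact (pwf_succ mul a x).symm
      have h3 : mul (q a) (q c) = q s := by
        have h4 := (IH (a + c) (by omega)).2 a c rfl
        simp only [hq]
        rw [h4, show a + c + 1 = s by omega]
      rw [h1, h2, h3] at hstar
      have h4 : Lop mul x = Lop mul (q 0) := by rw [hq]; simp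
      rw [h4] at hstar
      simpa only [hKK] using hstar
    have hlin : ∀ a b, a + b = s → KK a b = (a + 1) • KK 0 s := by
      intro a
      induction a with
      | zero =>
        intro b hb
        have : b = s := by omega
        subst this
        simp
      | succ a IH2 =>
        intro b hab
        have hs : a + (b + 1) = s := by omega
        have h1 := hrel a b hs
        have h2 := IH2 (b + 1) hs
        have h3 : KK (a+1) b - (KK a (b+1) + KK 0 s)
            = -(KK a (b+1) + KK b (a+1) + KK 0 s) := by
          rw [hanti b (a+1)]; abel
        rw [h1, neg_zero] at h3
        have h5 := sub_eq_zero.mp h3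
        rw [h5, h2]
        exact (succ_nsmul _ _).symm
    have hK0 : KK 0 s = 0 := by
      have h1 := hlin s 0 (by omega)
      rw [hanti s 0] at h1
      have h2 : (s + 1 + 1) • KK 0 s = 0 := by
        rw [succ_nsmul, ← h1]
        abel
      exact nat_torsion_free (s + 1) _ h2
    intro a b hab
    have h6 := hlin a b hab
    rw [hK0, smul_zero] at h6
    exact sub_eq_zero.mp h6

lemma pcomm (hcomm : ∀ u v : EE n, mul u v = mul v u)
    (hjordan : ∀ u v : EE n, mul u (mul (mul u u) v) = mul (mul u u) (mul u v))
    (x : EE n) (a b : ℕ) :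
    Lop mul (pwf mul a x) * Lop mul (pwf mul b x)
      = Lop mul (pwf mul b x) * Lop mul (pwf mul a x) :=
  (pcomm_pmul hcomm hjordan x (a + b)).1 a b rfl

/-- CLM version of commuting powers. -/
lemma pcommC (hcomm : ∀ u v : EE n, mul u v = mul v u)
    (hjordan : ∀ u v : EE n, mul u (mul (mul u u) v) = mul (mul u u) (mul u v))
    (x : EE n) (a b : ℕ) :
    Commute (Lcm mul (pwf mul a x)) (Lcm mul (pwf mul b x)) := by
  have h := pcomm hcomm hjordan x a b
  unfold Commute SemiconjBy
  refine ContinuousLinearMap.ext fun v => ?_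
  have h2 := LinearMap.congr_fun h v
  simp only [Module.End.mul_apply, Lop_apply] at h2
  simpa [ContinuousLinearMap.mul_apply] using h2

lemma Lcm_nilpotent (hnil : ∀ y : EE n, IsNilpotent (mul y)) (y : EE n) :
    IsNilpotent (Lcm mul y) := by
  obtain ⟨k, hk⟩ := hnil y
  refine ⟨k, ?_⟩
  have hpow : ∀ j (v : EE n), ((Lcm mul y) ^ j) v = ((mul y) ^ j) v := by
    intro j
    induction j with
    | zero => intro v; rfl
    | succ j hj =>
      intro v
      rw [pow_succ, pow_succ]
      simp only [ContinuousLinearMap.mul_apply, Module.End.mul_apply, Lcm_apply]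
      exact hj _
  refine ContinuousLinearMap.ext fun v => ?_
  rw [hpow k v, hk]
  rfl

lemma flip_pwf (hcomm : ∀ u v : EE n, mul u v = mul v u) (m : ℕ) (x : EE n) :
    (Lcm mul).flip (pwf mul m x) = Lcm mul (pwf mul m x) := by
  refine ContinuousLinearMap.ext fun v => ?_
  simp only [ContinuousLinearMap.flip_apply, Lcm_apply]
  exact hcomm v (pwf mul m x)

lemma Dm_succ_eq (hcomm : ∀ u v : EE n, mul u v = mul v u) (m : ℕ) (x : EE n) :
    Dm mul (m + 1) x = Lcm mul x * Dm mul m x + Lcm mul (pwf mul m x) := by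
  rw [Dm, flip_pwf hcomm]
  rfl

lemma commute_Lcm_Dm (hcomm : ∀ u v : EE n, mul u v = mul v u)
    (hjordan : ∀ u v : EE n, mul u (mul (mul u u) v) = mul (mul u u) (mul u v))
    (j m : ℕ) (x : EE n) :
    Commute (Lcm mul (pwf mul j x)) (Dm mul m x) := by
  induction m with
  | zero => exact Commute.one_right _
  | succ m ih =>
    rw [Dm_succ_eq hcomm]
    have h0 : Commute (Lcm mul (pwf mul j x)) (Lcm mul x) := by
      have h := pcommC hcomm hjordan x j 0
      rwa [pwf_zero] at h
    exact (h0.mul_right ih).add_right (pcommC hcomm hjordan x j m)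

lemma commute_Dm_Dm (hcomm : ∀ u v : EE n, mul u v = mul v u)
    (hjordan : ∀ u v : EE n, mul u (mul (mul u u) v) = mul (mul u u) (mul u v))
    (m m' : ℕ) (x : EE n) :
    Commute (Dm mul m x) (Dm mul m' x) := by
  induction m with
  | zero => exact Commute.one_left _
  | succ m ih =>
    rw [Dm_succ_eq hcomm]
    have h0 : Commute (Lcm mul x) (Dm mul m' x) := by
      have h := commute_Lcm_Dm hcomm hjordan 0 m' x
      rwa [pwf_zero] at h
    exact (h0.mul_left ih).add_left (commute_Lcm_Dm hcomm hjordan m m' x)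

lemma Dm_apply_self (m : ℕ) (x : EE n) :
    Dm mul m x x = (m + 1) • pwf mul m x := by
  induction m with
  | zero => simp [Dm]
  | succ m ih =>
    rw [Dm]
    simp only [ContinuousLinearMap.add_apply, ContinuousLinearMap.coe_comp',
      Function.comp_apply, ContinuousLinearMap.flip_apply, Lcm_apply]
    rw [ih, map_nsmul, ← pwf_succ]
    exact (succ_nsmul _ _).symm

lemma Dm_nilpotent (hcomm : ∀ u v : EE n, mul u v = mul v u)
    (hjordan : ∀ u v : EE n, mul u (mul (mul u u) v) = mul (mul u u) (mul u v))
    (hnil : ∀ y : EE n, IsNilpotent (mul y)) (m : ℕ) (x : EE n) :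
    IsNilpotent (Dm mul (m + 1) x) := by
  rw [Dm_succ_eq hcomm]
  have hx : IsNilpotent (Lcm mul x) := Lcm_nilpotent hnil x
  have h1 : IsNilpotent (Lcm mul x * Dm mul m x) := by
    have hc : Commute (Lcm mul x) (Dm mul m x) := by
      have h := commute_Lcm_Dm hcomm hjordan 0 m x
      rwa [pwf_zero] at h
    exact hc.isNilpotent_mul_right hx
  have h2 : IsNilpotent (Lcm mul (pwf mul m x)) := Lcm_nilpotent hnil _
  refine Commute.isNilpotent_add ?_ h1 h2
  have ha : Commute (Lcm mul x) (Lcm mul (pwf mul m x)) := by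
    have h := pcommC hcomm hjordan x 0 m
    rwa [pwf_zero] at h
  exact Commute.mul_left ha ((commute_Lcm_Dm hcomm hjordan m m x).symm)

lemma Lselfadj (hcomm : ∀ u v : EE n, mul u v = mul v u)
    (htrace : ∀ u v w : EE n, γ (mul u v) w = γ u (mul v w))
    (a u v : EE n) : γ (mul a u) v = γ u (mul a v) := by
  rw [hcomm a u, htrace]

lemma Dm_selfadj (hcomm : ∀ u v : EE n, mul u v = mul v u)
    (hjordan : ∀ u v : EE n, mul u (mul (mul u u) v) = mul (mul u u) (mul u v))
    (htrace : ∀ u v w : EE n, γ (mul u v) w = γ u (mul v w))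
    (m : ℕ) (x : EE n) (u v : EE n) :
    γ (Dm mul m x u) v = γ u (Dm mul m x v) := by
  induction m generalizing u v with
  | zero => rfl
  | succ m ih =>
    rw [Dm_succ_eq hcomm]
    simp only [ContinuousLinearMap.add_apply, ContinuousLinearMap.mul_apply, Lcm_apply,
      map_add, LinearMap.add_apply]
    congr 1
    · rw [Lselfadj hcomm htrace, ih]
      congr 1
      have hc : Commute (Lcm mul x) (Dm mul m x) := by
        have h := commute_Lcm_Dm hcomm hjordan 0 m x
        rwa [pwf_zero] at h
      have h2 := hc.symm
      unfold Commute SemiconjBy at h2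
      have happ := congrArg (fun (f : EE n →L[ℝ] EE n) => f v) h2
      simpa [ContinuousLinearMap.mul_apply] using happ
    · exact Lselfadj hcomm htrace _ _ _

end Algebra

section Analysis

variable (mul : EE n →ₗ[ℝ] EE n →ₗ[ℝ] EE n)

lemma hasFDerivAt_pwf (m : ℕ) (x : EE n) :
    HasFDerivAt (fun y : EE n => pwf mul m y) (Dm mul m x) x := by
  induction m with
  | zero =>
    have h0 : (fun y : EE n => pwf mul 0 y) = fun y : EE n => y := funext fun y => by simp
    rw [h0]
    exact hasFDerivAt_id x
  | succ m ih =>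
    have h1 : (fun y : EE n => pwf mul (m + 1) y) = fun y => (Lcm mul y) (pwf mul m y) :=
      funext fun y => by rw [pwf_succ, Lcm_apply]
    rw [h1]
    exact (Lcm mul).hasFDerivAt.clm_apply ih

end Analysis

/-- det (1 + nilpotent) = 1 over ℝ. -/
lemma det_one_add_nilpotent {m : ℕ} (M : Matrix (Fin m) (Fin m) ℝ) (hM : IsNilpotent M) :
    (1 + M).det = 1 := by
  have hc : M.charpoly = Polynomial.X ^ m := by
    have h := Matrix.isNilpotent_charpoly_sub_pow_of_isNilpotent hM
    obtain ⟨k, hk⟩ := h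
    have hk0 : k ≠ 0 := by
      rintro rfl
      simp only [pow_zero] at hk
      exact one_ne_zero hk
    have h0 : M.charpoly - Polynomial.X ^ Fintype.card (Fin m) = 0 :=
      pow_eq_zero_iff hk0 |>.mp hk
    rw [sub_eq_zero] at h0
    simpa [Fintype.card_fin] using h0
  have he : Polynomial.eval (-1 : ℝ) M.charpoly = (-1 : ℝ) ^ m := by
    rw [hc]; simp
  rw [Matrix.charpoly, eval_det, Matrix.matPolyEquiv_charmatrix] at he
  rw [Polynomial.eval_sub, Polynomial.eval_X, Polynomial.eval_C] at he
  have hs : Matrix.scalar (Fin m) (-1 : ℝ) - M = -(1 + M) := by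
    have h1 : Matrix.scalar (Fin m) (-1 : ℝ) = -(1 : Matrix (Fin m) (Fin m) ℝ) := by
      ext i j
      rcases eq_or_ne i j with h | h <;>
        simp [Matrix.scalar, Matrix.diagonal_apply, Matrix.one_apply, Matrix.neg_apply, h]
    rw [h1]; abel
  rw [hs, Matrix.det_neg, Fintype.card_fin] at he
  have hne : ((-1 : ℝ) ^ m) ≠ 0 := by
    apply pow_ne_zero; norm_num
  calc (1 + M).det = ((-1 : ℝ) ^ m)⁻¹ * ((-1 : ℝ) ^ m * (1 + M).det) := by
        field_simp
    _ = ((-1 : ℝ) ^ m)⁻¹ * ((-1 : ℝ) ^ m) := by rw [he]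
    _ = 1 := by field_simp

end Stmt5

open Stmt5 in
set_option maxHeartbeats 1000000 in
theorem stmt_5 {n : ℕ}
    (mul : EuclideanSpace ℝ (Fin n) →ₗ[ℝ] EuclideanSpace ℝ (Fin n) →ₗ[ℝ] EuclideanSpace ℝ (Fin n))
    (γ : EuclideanSpace ℝ (Fin n) →ₗ[ℝ] EuclideanSpace ℝ (Fin n) →ₗ[ℝ] ℝ)
    (hcomm : ∀ u v, mul u v = mul v u)
    (hjordan : ∀ u v, mul u (mul (mul u u) v) = mul (mul u u) (mul u v))
    (hsymm : ∀ u v, γ u v = γ v u)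
    (hndγ : ∀ u, (∀ v, γ u v = 0) → u = 0)
    (htrace : ∀ u v w, γ (mul u v) w = γ u (mul v w))
    (hnil : ∀ x, IsNilpotent (mul x))
    (F : EuclideanSpace ℝ (Fin n) → ℝ)
    (hF : F = fun x => ∑ k ∈ Finset.Icc 2 (n + 1),
      ((-1 : ℝ)) ^ k / (k : ℝ) * γ x (jpow mul x (k - 1))) :
    ∀ x : EuclideanSpace ℝ (Fin n),
      (∀ u, (∀ v, iteratedFDeriv ℝ 2 F x ![u, v] = 0) → u = 0) ∧
      (∀ u v, iteratedFDeriv ℝ 2 F x ![u, v] = iteratedFDeriv ℝ 2 F x ![v, u]) ∧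
      ∀ (b : Module.Basis (Fin n) ℝ (EuclideanSpace ℝ (Fin n))),
        (Matrix.of fun i j => iteratedFDeriv ℝ 2 F x ![b i, b j]).det =
        (Matrix.of fun i j => γ (b i) (b j)).det := by
  subst hF
  intro x
  -- first derivative
  have hFd : ∀ y : EuclideanSpace ℝ (Fin n),
      HasFDerivAt (fun x' => ∑ k ∈ Finset.Icc 2 (n + 1),
        ((-1 : ℝ)) ^ k / (k : ℝ) * γ x' (jpow mul x' (k - 1)))
      (∑ k ∈ Finset.Icc 2 (n + 1), ((-1 : ℝ)) ^ k • ((Gc γ).flip (pwf mul (k - 2) y))) y := by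
    intro y
    apply HasFDerivAt.fun_sum
    intro k hk
    have hk2 : 2 ≤ k := (Finset.mem_Icc.mp hk).1
    have h1 : (fun x' : EuclideanSpace ℝ (Fin n) =>
        ((-1 : ℝ)) ^ k / (k : ℝ) * γ x' (jpow mul x' (k - 1)))
        = fun x' => ((-1 : ℝ)) ^ k / (k : ℝ) * (Gc γ) x' (pwf mul (k - 2) x') := by
      funext x'
      have hkk : k - 1 - 1 = k - 2 := by omega
      simp [jpow, pwf, hkk]
    rw [h1]
    have h2 := ((Gc γ).hasFDerivAt.clm_apply (hasFDerivAt_pwf mul (k - 2) y)).const_mul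
      (((-1 : ℝ)) ^ k / (k : ℝ))
    have h3 : (((-1 : ℝ)) ^ k / (k : ℝ)) •
          (((Gc γ) y).comp (Dm mul (k - 2) y) + (Gc γ).flip (pwf mul (k - 2) y))
        = ((-1 : ℝ)) ^ k • ((Gc γ).flip (pwf mul (k - 2) y)) := by
      ext v
      simp only [ContinuousLinearMap.smul_apply, ContinuousLinearMap.add_apply,
        ContinuousLinearMap.coe_comp', Function.comp_apply, ContinuousLinearMap.flip_apply,
        Gc_apply, smul_eq_mul]
      have hDm : γ y (Dm mul (k - 2) y v) = ((k : ℝ) - 1) * γ v (pwf mul (k - 2) y) := by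
        rw [hsymm, Dm_selfadj hcomm hjordan htrace, Dm_apply_self, map_nsmul]
        rw [nsmul_eq_mul]
        congr 1
        push_cast [Nat.cast_sub hk2]
        ring
      rw [hDm]
      have hkne : (k : ℝ) ≠ 0 := by positivity
      field_simp
      ring
    rw [← h3]
    exact h2
  have hfderiv : (fderiv ℝ (fun x' => ∑ k ∈ Finset.Icc 2 (n + 1),
        ((-1 : ℝ)) ^ k / (k : ℝ) * γ x' (jpow mul x' (k - 1))))
      = fun y => ∑ k ∈ Finset.Icc 2 (n + 1),
        ((-1 : ℝ)) ^ k • ((Gc γ).flip (pwf mul (k - 2) y)) :=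
    funext fun y => (hFd y).fderiv
  -- second derivative
  have hGd : HasFDerivAt (fun y => ∑ k ∈ Finset.Icc 2 (n + 1),
      ((-1 : ℝ)) ^ k • ((Gc γ).flip (pwf mul (k - 2) y)))
      (∑ k ∈ Finset.Icc 2 (n + 1),
        ((-1 : ℝ)) ^ k • ((Gc γ).flip.comp (Dm mul (k - 2) x))) x := by
    apply HasFDerivAt.fun_sum
    intro k _
    exact ((Gc γ).flip.hasFDerivAt.comp x (hasFDerivAt_pwf mul (k - 2) x)).const_smul
      (((-1 : ℝ)) ^ k)
  set T : EuclideanSpace ℝ (Fin n) →L[ℝ] EuclideanSpace ℝ (Fin n) :=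
    ∑ k ∈ Finset.Icc 2 (n + 1), ((-1 : ℝ)) ^ k • Dm mul (k - 2) x with hT
  have hH : ∀ u v, iteratedFDeriv ℝ 2 (fun x' => ∑ k ∈ Finset.Icc 2 (n + 1),
      ((-1 : ℝ)) ^ k / (k : ℝ) * γ x' (jpow mul x' (k - 1))) x ![u, v] = γ v (T u) := by
    intro u v
    rw [iteratedFDeriv_two_apply]
    simp only [Matrix.cons_val_zero, Matrix.cons_val_one, Matrix.head_cons]
    rw [hfderiv, hGd.fderiv]
    simp only [hT, ContinuousLinearMap.sum_apply, ContinuousLinearMap.smul_apply,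
      ContinuousLinearMap.coe_comp', Function.comp_apply, ContinuousLinearMap.flip_apply,
      Gc_apply, map_sum, map_smul, smul_eq_mul]
  -- T = 1 + nilpotent (at the linear-map level)
  set Tl : EuclideanSpace ℝ (Fin n) →ₗ[ℝ] EuclideanSpace ℝ (Fin n) :=
    (T : EuclideanSpace ℝ (Fin n) →ₗ[ℝ] EuclideanSpace ℝ (Fin n)) with hTl
  have hsplit : ∃ N : Module.End ℝ (EuclideanSpace ℝ (Fin n)),
      IsNilpotent N ∧ Tl = 1 + N := by
    rcases Nat.eq_zero_or_pos n with hn | hn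
    · subst hn
      haveI : Subsingleton (EuclideanSpace ℝ (Fin 0)) :=
        ⟨fun a b => by ext i; exact absurd i.2 (by omega)⟩
      haveI : Subsingleton (Module.End ℝ (EuclideanSpace ℝ (Fin 0))) :=
        ⟨fun f g => LinearMap.ext fun v => Subsingleton.elim _ _⟩
      exact ⟨0, ⟨1, by simp⟩, Subsingleton.elim _ _⟩
    · refine ⟨∑ k ∈ Finset.Icc 3 (n + 1), ((-1 : ℝ)) ^ k •
          ((Dm mul (k - 2) x : EuclideanSpace ℝ (Fin n) →L[ℝ] EuclideanSpace ℝ (Fin n)) :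
            EuclideanSpace ℝ (Fin n) →ₗ[ℝ] EuclideanSpace ℝ (Fin n)), ?_, ?_⟩
      · apply Commute.isNilpotent_sum
        · intro k hk
          have hk3 : 3 ≤ k := (Finset.mem_Icc.mp hk).1
          obtain ⟨m, hm⟩ : ∃ m, k - 2 = m + 1 := ⟨k - 3, by omega⟩
          rw [hm]
          have hnp := (Dm_nilpotent hcomm hjordan hnil m x).map
            (ContinuousLinearMap.toLinearMapRingHom (R₁ := ℝ)
              (M₁ := EuclideanSpace ℝ (Fin n)))
          exact IsNilpotent.smul hnp _
        · intro k j _ _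
          have hc := (commute_Dm_Dm hcomm hjordan (k-2) (j-2) x).map
            (ContinuousLinearMap.toLinearMapRingHom (R₁ := ℝ)
              (M₁ := EuclideanSpace ℝ (Fin n)))
          exact (hc.smul_left _).smul_right _
      · rw [hTl, hT]
        have hins : Finset.Icc 2 (n + 1) = insert 2 (Finset.Icc 3 (n + 1)) := by
          ext j
          simp only [Finset.mem_Icc, Finset.mem_insert]
          omega
        rw [hins, Finset.sum_insert (by simp)]
        rw [ContinuousLinearMap.coe_add, ContinuousLinearMap.coe_sum]
        congr 1
        · rw [ContinuousLinearMap.coe_smul]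
          norm_num
          rfl
  obtain ⟨N, hNnil, hTN⟩ := hsplit
  have hTlunit : IsUnit Tl := hTN ▸ hNnil.isUnit_one_add
  have hTadj : ∀ u v, γ (T u) v = γ u (T v) := by
    intro u v
    rw [hT, ContinuousLinearMap.sum_apply, ContinuousLinearMap.sum_apply,
      map_sum, LinearMap.sum_apply, map_sum]
    refine Finset.sum_congr rfl fun k _ => ?_
    rw [ContinuousLinearMap.smul_apply, ContinuousLinearMap.smul_apply,
      map_smul, LinearMap.smul_apply, map_smul]
    congr 1
    exact Dm_selfadj hcomm hjordan htrace _ _ _ _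
  refine ⟨?_, ?_, ?_⟩
  · -- nondegenerate
    intro u hu
    have hTu : T u = 0 := by
      apply hndγ
      intro v
      rw [hsymm, ← hH u v]
      exact hu v
    obtain ⟨U, hU⟩ := hTlunit
    have h7 : u = (↑U⁻¹ * ↑U : Module.End ℝ (EuclideanSpace ℝ (Fin n))) u := by
      rw [U.inv_mul]
      rfl
    have h8 : Tl u = 0 := hTu
    rw [h7, Module.End.mul_apply, hU, h8, map_zero]
  · -- symmetric
    intro u v
    rw [hH u v, hH v u, hsymm, hTadj]
  · -- determinant
    intro b
    set Ml := LinearMap.toMatrix b b Tl with hMl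
    have hA : (Matrix.of fun i j => iteratedFDeriv ℝ 2 (fun x' => ∑ k ∈ Finset.Icc 2 (n + 1),
        ((-1 : ℝ)) ^ k / (k : ℝ) * γ x' (jpow mul x' (k - 1))) x ![b i, b j])
        = Ml.transpose * (Matrix.of fun i j => γ (b i) (b j)) := by
      ext i j
      rw [Matrix.of_apply, hH (b i) (b j), Matrix.mul_apply]
      rw [hsymm (b j) (T (b i))]
      have hrepr : T (b i) = ∑ k, Ml k i • b k := by
        conv_lhs => rw [show T (b i) = Tl (b i) from rfl, ← Module.Basis.sum_repr b (Tl (b i))]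
        refine Finset.sum_congr rfl fun k _ => ?_
        congr 1
        rw [hMl, LinearMap.toMatrix_apply]
      rw [hrepr, map_sum, LinearMap.sum_apply]
      refine Finset.sum_congr rfl fun k _ => ?_
      rw [map_smul, LinearMap.smul_apply, smul_eq_mul, Matrix.transpose_apply, Matrix.of_apply]
    rw [hA, Matrix.det_mul, Matrix.det_transpose]
    have hdet1 : Ml.det = 1 := by
      have hMl2 : Ml = 1 + LinearMap.toMatrix b b N := by
        rw [hMl, hTN, map_add, LinearMap.toMatrix_one]
      rw [hMl2]
      apply det_one_add_nilpotent
      obtain ⟨k, hk⟩ := hNnil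
      refine ⟨k, ?_⟩
      have hpowm : ∀ j : ℕ, (LinearMap.toMatrix b b N) ^ j
          = LinearMap.toMatrix b b (N ^ j) := by
        intro j
        induction j with
        | zero => rw [pow_zero, pow_zero, LinearMap.toMatrix_one]
        | succ j hj =>
          rw [pow_succ, hj, pow_succ, ← LinearMap.toMatrix_mul]
      rw [hpowm k, hk]
      simp
    rw [hdet1, one_mul]
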